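/- Let μ > 0, α < 0, N a positive integer, ω > α²/N², and let w(x) = φ_{ω,−a⁰}(x) with a⁰ = (1/(μ√ω)) arctanh(|α|/(N√ω)) be the common component of the N-tail state. Let ψ₁,…,ψ_N : [0,∞) → ℝ be continuously differentiable functions with ψ₁(0) = … = ψ_N(0), each ψ_k and ψ_k' square-integrable, and ψ_k(x) → 0 as x → ∞. Then the quadratic form of L₊ satisfies the identity Σ_{k=1}^N ∫₀^∞ ( ψ_k'(x)² + ω ψ_k(x)² − w(x)^{2μ} ψ_k(x)² ) dx + α ψ₁(0)² = Σ_{k=1}^N ∫₀^∞ w(x)² · ( (ψ_k/w)'(x) )² dx. In particular the left-hand side is nonnegative, and it vanishes if and only if every ψ_k is the same constant multiple of w. -/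

import Mathlib

open MeasureTheory Set Filter

/-- The soliton profile `φ_{ω,a}(x) = ((μ+1)ω)^{1/(2μ)} sech^{1/μ}(μ√ω (x − a))`. -/
noncomputable def solitonProfile (μ ω a : ℝ) (x : ℝ) : ℝ :=
  ((μ + 1) * ω) ^ (1 / (2 * μ)) *
    (1 / Real.cosh (μ * Real.sqrt ω * (x - a))) ^ (1 / μ)

/-- The inverse hyperbolic tangent. -/
noncomputable def arctanh (x : ℝ) : ℝ := (1 / 2) * Real.log ((1 + x) / (1 - x))

lemma real_continuous_tanh : Continuous Real.tanh := by
  have : Real.tanh = fun x => Real.sinh x / Real.cosh x := funext fun x => Real.tanh_eq_sinh_div_cosh x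
  rw [this]
  exact Real.differentiable_sinh.continuous.div Real.differentiable_cosh.continuous
    (fun x => (Real.cosh_pos x).ne')

lemma abs_tanh_le_one (x : ℝ) : |Real.tanh x| ≤ 1 := by
  rw [Real.tanh_eq_sinh_div_cosh, abs_div, abs_of_pos (Real.cosh_pos x),
    div_le_one (Real.cosh_pos x)]
  nlinarith [Real.cosh_sq_sub_sinh_sq x, abs_nonneg (Real.sinh x), sq_abs (Real.sinh x),
    Real.cosh_pos x]

lemma tanh_arctanh {y : ℝ} (h1 : -1 < y) (h2 : y < 1) : Real.tanh (arctanh y) = y := by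
  have hA : 0 < (1 + y) / (1 - y) := div_pos (by linarith) (by linarith)
  set A := (1 + y) / (1 - y) with hAdef
  set z := arctanh y with hz
  have hE : Real.exp z ^ 2 = A := by
    have : (2 : ℝ) * z = Real.log A := by
      rw [hz]; unfold arctanh; ring
    have h2z : Real.exp (2 * z) = A := by rw [this, Real.exp_log hA]
    calc Real.exp z ^ 2 = Real.exp z ^ (2 : ℕ) := by norm_num
      _ = Real.exp ((2 : ℕ) * z) := (Real.exp_nat_mul z 2).symm
      _ = A := by push_cast; exact h2z
  have hEpos : 0 < Real.exp z := Real.exp_pos z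
  rw [Real.tanh_eq_sinh_div_cosh, Real.sinh_eq, Real.cosh_eq, Real.exp_neg]
  have hden : Real.exp z + (Real.exp z)⁻¹ ≠ 0 := by positivity
  have h1y : (1 : ℝ) - y ≠ 0 := by linarith
  have hE' : Real.exp z ^ 2 * (1 - y) = 1 + y := by
    rw [hAdef, eq_div_iff h1y] at hE; linarith [hE]
  field_simp
  nlinarith [hE', hEpos]

lemma soliton_pos (μ ω : ℝ) (hμ : 0 < μ) (hω : 0 < ω) (a x : ℝ) :
    0 < solitonProfile μ ω a x := by
  unfold solitonProfile
  have h1 : (0:ℝ) < (μ+1)*ω := mul_pos (by linarith) hω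
  have h2 : (0:ℝ) < 1 / Real.cosh (μ * Real.sqrt ω * (x - a)) :=
    one_div_pos.mpr (Real.cosh_pos _)
  exact mul_pos (Real.rpow_pos_of_pos h1 _) (Real.rpow_pos_of_pos h2 _)

lemma soliton_hasDerivAt (μ ω : ℝ) (hμ : 0 < μ) (hω : 0 < ω) (a₀ x : ℝ) :
    HasDerivAt (solitonProfile μ ω (-a₀))
      (-(Real.sqrt ω * Real.tanh (μ * Real.sqrt ω * (x + a₀))) * solitonProfile μ ω (-a₀) x) x := by
  have hs : 0 < Real.sqrt ω := Real.sqrt_pos.mpr hω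
  set b := μ * Real.sqrt ω with hb
  set C := ((μ+1)*ω) ^ (1/(2*μ) : ℝ) with hC
  have hweq : solitonProfile μ ω (-a₀) = fun y => C * Real.cosh (b * (y + a₀)) ^ (-(1/μ) : ℝ) := by
    funext y; unfold solitonProfile
    rw [sub_neg_eq_add, one_div (Real.cosh _), Real.inv_rpow (Real.cosh_pos _).le,
      ← Real.rpow_neg (Real.cosh_pos _).le]
  rw [hweq]
  have hlin : HasDerivAt (fun y : ℝ => b * (y + a₀)) b x := by
    simpa using ((hasDerivAt_id x).add_const a₀).const_mul b
  have hcosh : HasDerivAt (fun y : ℝ => Real.cosh (b * (y + a₀)))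
      (Real.sinh (b*(x+a₀)) * b) x := (Real.hasDerivAt_cosh _).comp x hlin
  have hrpow : HasDerivAt (fun y : ℝ => y ^ (-(1/μ) : ℝ))
      (-(1/μ) * Real.cosh (b*(x+a₀)) ^ (-(1/μ) - 1 : ℝ)) (Real.cosh (b*(x+a₀))) :=
    Real.hasDerivAt_rpow_const (Or.inl (Real.cosh_pos _).ne')
  have hD := (hrpow.comp x hcosh).const_mul C
  refine hD.congr_deriv ?_
  symm
  have hc := Real.cosh_pos (b*(x+a₀))
  rw [Real.tanh_eq_sinh_div_cosh]
  rw [show (-(1/μ) - 1 : ℝ) = (-(1/μ)) + (-1) by ring, Real.rpow_add hc, Real.rpow_neg_one]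
  rw [hb]
  field_simp

lemma soliton_rpow (μ ω : ℝ) (hμ : 0 < μ) (hω : 0 < ω) (a₀ x : ℝ) :
    solitonProfile μ ω (-a₀) x ^ (2*μ : ℝ)
      = (μ+1)*ω * (1 - Real.tanh (μ*Real.sqrt ω*(x+a₀)) ^ 2) := by
  unfold solitonProfile
  rw [sub_neg_eq_add]
  set z := μ*Real.sqrt ω*(x+a₀) with hz
  have hc := Real.cosh_pos z
  have h1 : (0:ℝ) < (μ+1)*ω := mul_pos (by linarith) hω
  have h2 : (0:ℝ) ≤ 1 / Real.cosh z := (one_div_pos.mpr hc).le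
  rw [Real.mul_rpow (Real.rpow_nonneg h1.le _) (Real.rpow_nonneg h2 _)]
  rw [← Real.rpow_mul h1.le, ← Real.rpow_mul h2]
  rw [show (1/(2*μ)) * (2*μ) = (1:ℝ) by field_simp, Real.rpow_one]
  rw [show ((1:ℝ)/μ)*(2*μ) = ((2:ℕ):ℝ) by push_cast; field_simp, Real.rpow_natCast]
  rw [Real.tanh_eq_sinh_div_cosh]
  have h3 := Real.cosh_sq_sub_sinh_sq z
  field_simp
  linarith

lemma alg_id (μ s ch sh f f' : ℝ) (hch : ch ≠ 0) (hsh : ch^2 - sh^2 = 1) :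
    -(s*(μ*s)*(1/ch^2))*f^2 - s*(sh/ch)*(2*f*f') =
      f'^2 + s^2*f^2 - (μ+1)*s^2*(1-(sh/ch)^2)*f^2 - (f' + s*(sh/ch)*f)^2 := by
  field_simp
  linear_combination (μ * s^2 * f^2) * hsh

lemma edge (μ ω a₀ : ℝ) (hμ : 0 < μ) (hω : 0 < ω) (f : ℝ → ℝ) (hf : ContDiff ℝ 1 f)
    (hL2 : IntegrableOn (fun x => f x ^ 2) (Ioi 0))
    (hL2' : IntegrableOn (fun x => (deriv f x) ^ 2) (Ioi 0))
    (hdec : Tendsto f atTop (nhds 0)) :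
    IntegrableOn (fun x => (deriv f x
        + (Real.sqrt ω * Real.tanh (μ * Real.sqrt ω * (x + a₀))) * f x) ^ 2) (Ioi 0) ∧
    (∀ x : ℝ, HasDerivAt (fun y => f y / solitonProfile μ ω (-a₀) y)
       ((deriv f x + Real.sqrt ω * Real.tanh (μ * Real.sqrt ω * (x + a₀)) * f x)
          / solitonProfile μ ω (-a₀) x) x) ∧
    (∫ x in Ioi (0:ℝ), ((deriv f x)^2 + ω * f x^2
        - solitonProfile μ ω (-a₀) x ^ (2*μ:ℝ) * f x^2))
      = (∫ x in Ioi (0:ℝ), (deriv f x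
            + Real.sqrt ω * Real.tanh (μ * Real.sqrt ω * (x + a₀)) * f x) ^ 2)
        + (Real.sqrt ω * Real.tanh (μ * Real.sqrt ω * (0 + a₀))) * f 0 ^ 2 := by
  have hs : 0 < Real.sqrt ω := Real.sqrt_pos.mpr hω
  have hs2 : Real.sqrt ω ^ 2 = ω := Real.sq_sqrt hω.le
  set s := Real.sqrt ω with hsdef
  set T : ℝ → ℝ := fun x => s * Real.tanh (μ * s * (x + a₀)) with hT
  set w : ℝ → ℝ := solitonProfile μ ω (-a₀) with hwdef
  have hwpos : ∀ x, 0 < w x := fun x => soliton_pos μ ω hμ hω (-a₀) x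
  have hfd : Differentiable ℝ f := hf.differentiable one_ne_zero
  have hfc : Continuous f := hfd.continuous
  have hf'c : Continuous (deriv f) := hf.continuous_deriv le_rfl
  have hTc : Continuous T := by
    exact continuous_const.mul (real_continuous_tanh.comp
      (continuous_const.mul (continuous_id.add continuous_const)))
  have hTbd : ∀ x, |T x| ≤ s := by
    intro x
    rw [hT, abs_mul, abs_of_pos hs]
    calc s * |Real.tanh (μ * s * (x + a₀))| ≤ s * 1 :=
          mul_le_mul_of_nonneg_left (abs_tanh_le_one _) hs.le
      _ = s := mul_one s
  have hhc : Continuous (fun x => deriv f x + T x * f x) :=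
    hf'c.add (hTc.mul hfc)
  -- integrability of h²
  have ih2 : IntegrableOn (fun x => (deriv f x + T x * f x) ^ 2) (Ioi 0) := by
    apply Integrable.mono ((hL2'.const_mul 2).add (hL2.const_mul (2*ω)))
      ((hhc.pow 2).aestronglyMeasurable.restrict)
    refine ae_of_all _ fun x => ?_
    have ht2 : T x ^ 2 ≤ ω := by
      have := hTbd x
      nlinarith [abs_nonneg (T x), sq_abs (T x)]
    have h1 : (0:ℝ) ≤ (deriv f x + T x * f x)^2 := sq_nonneg _
    simp only [Pi.pow_apply, Pi.add_apply]
    rw [Real.norm_eq_abs, Real.norm_eq_abs, abs_of_nonneg h1]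
    have h2 : (deriv f x + T x * f x)^2 ≤ 2 * (deriv f x)^2 + 2*ω * f x^2 := by
      nlinarith [sq_nonneg (deriv f x - T x * f x), sq_nonneg (f x), ht2]
    calc (deriv f x + T x * f x)^2 ≤ 2 * (deriv f x)^2 + 2*ω * f x^2 := h2
      _ ≤ |2 * (deriv f x)^2 + 2*ω * f x^2| := le_abs_self _
  -- integrability of w^{2μ} f²
  have hwrpow : ∀ x, w x ^ (2*μ:ℝ) = (μ+1)*ω * (1 - Real.tanh (μ*s*(x+a₀))^2) :=
    fun x => soliton_rpow μ ω hμ hω a₀ x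
  have iw : IntegrableOn (fun x => w x ^ (2*μ:ℝ) * f x^2) (Ioi 0) := by
    have heq : (fun x => w x ^ (2*μ:ℝ) * f x^2)
        = fun x => ((μ+1)*ω * (1 - Real.tanh (μ*s*(x+a₀))^2)) * f x^2 :=
      funext fun x => by rw [hwrpow x]
    rw [heq]
    apply Integrable.mono (hL2.const_mul ((μ+1)*ω))
    · exact ((continuous_const.mul ((continuous_const.sub ((real_continuous_tanh.comp
        (continuous_const.mul (continuous_id.add continuous_const))).pow 2)))).mul
        (hfc.pow 2)).aestronglyMeasurable.restrict
    refine ae_of_all _ fun x => ?_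
    have h1 : |Real.tanh (μ*s*(x+a₀))| ≤ 1 := abs_tanh_le_one _
    have h2 : (0:ℝ) ≤ 1 - Real.tanh (μ*s*(x+a₀))^2 := by
      nlinarith [sq_abs (Real.tanh (μ*s*(x+a₀))), abs_nonneg (Real.tanh (μ*s*(x+a₀)))]
    have h3 : (0:ℝ) < (μ+1)*ω := mul_pos (by linarith) hω
    rw [Real.norm_eq_abs, Real.norm_eq_abs, abs_of_nonneg (by positivity)]
    have h4 : (μ+1)*ω * (1 - Real.tanh (μ*s*(x+a₀))^2) * f x^2 ≤ (μ+1)*ω * f x^2 := by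
      nlinarith [mul_nonneg (mul_nonneg h3.le (sq_nonneg (Real.tanh (μ*s*(x+a₀)))))
        (sq_nonneg (f x))]
    calc _ ≤ (μ+1)*ω * f x^2 := h4
      _ ≤ |(μ+1)*ω * f x^2| := le_abs_self _
  -- integrability of the integrand
  have iInt : IntegrableOn (fun x => (deriv f x)^2 + ω * f x^2 - w x ^ (2*μ:ℝ) * f x^2)
      (Ioi 0) := (hL2'.add (hL2.const_mul ω)).sub iw
  constructor
  · exact ih2
  -- derivative of the quotient
  have hquot : ∀ x : ℝ, HasDerivAt (fun y => f y / w y)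
      ((deriv f x + T x * f x) / w x) x := by
    intro x
    have hwd := soliton_hasDerivAt μ ω hμ hω a₀ x
    rw [← hwdef, ← hsdef] at hwd
    have := (hfd x).hasDerivAt.div hwd (hwpos x).ne'
    refine this.congr_deriv ?_
    symm
    simp only [hT]
    field_simp [(hwpos x).ne']
    ring
  refine ⟨fun x => hquot x, ?_⟩
  -- FTC argument
  set F : ℝ → ℝ := fun x => -(T x) * f x^2 with hF
  have hFderiv : ∀ x : ℝ, HasDerivAt F
      (((deriv f x)^2 + ω * f x^2 - w x ^ (2*μ:ℝ) * f x^2)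
        - (deriv f x + T x * f x)^2) x := by
    intro x
    have hlin : HasDerivAt (fun y : ℝ => μ * s * (y + a₀)) (μ * s) x := by
      simpa using ((hasDerivAt_id x).add_const a₀).const_mul (μ * s)
    have hch := Real.cosh_pos (μ * s * (x + a₀))
    have hsh := Real.cosh_sq_sub_sinh_sq (μ * s * (x + a₀))
    have hq : HasDerivAt (fun y => Real.sinh (μ*s*(y+a₀)) / Real.cosh (μ*s*(y+a₀)))
        ((μ*s) / Real.cosh (μ*s*(x+a₀))^2) x := by
      have := ((Real.hasDerivAt_sinh _).comp x hlin).div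
        ((Real.hasDerivAt_cosh _).comp x hlin) hch.ne'
      refine this.congr_deriv ?_
      symm
      simp only [Function.comp_apply]
      field_simp
      linear_combination (-1 : ℝ) * hsh
    have hTeq : T = fun y => s * (Real.sinh (μ*s*(y+a₀)) / Real.cosh (μ*s*(y+a₀))) :=
      funext fun y => by simp only [hT]; rw [Real.tanh_eq_sinh_div_cosh]
    have hf2 : HasDerivAt (fun y => f y ^ 2) (2 * f x ^ 1 * deriv f x) x :=
      (hfd x).hasDerivAt.pow 2
    have hFd : HasDerivAt F
        (-(s * ((μ*s) / Real.cosh (μ*s*(x+a₀))^2)) * f x^2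
          + (-(s * (Real.sinh (μ*s*(x+a₀)) / Real.cosh (μ*s*(x+a₀))))) * (2 * f x ^ 1 * deriv f x)) x := by
      rw [hF, hTeq]
      exact ((hq.const_mul s).neg).mul hf2
    convert hFd using 1
    have halg := alg_id μ s (Real.cosh (μ*s*(x+a₀))) (Real.sinh (μ*s*(x+a₀)))
      (f x) (deriv f x) hch.ne' hsh
    rw [hwrpow x]
    simp only [hT, Real.tanh_eq_sinh_div_cosh]
    rw [← hs2]
    have hchinv : Real.cosh (μ*s*(x+a₀)) * (Real.cosh (μ*s*(x+a₀)))⁻¹ = 1 :=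
      mul_inv_cancel₀ hch.ne'
    linear_combination halg - (2*μ*s^2* f x^2 / Real.cosh (μ*s*(x+a₀))^2) * hsh
      + (2*μ*s^2*f x^2*(Real.cosh (μ*s*(x+a₀)) * (Real.cosh (μ*s*(x+a₀)))⁻¹ + 1)) * hchinv
  have hFtend : Tendsto F atTop (nhds 0) := by
    have h1 : Tendsto (fun x => s * f x ^ 2) atTop (nhds 0) := by
      have := (hdec.pow 2).const_mul s
      simpa using this
    apply squeeze_zero_norm _ h1
    intro x
    rw [hF]
    calc ‖-(T x) * f x^2‖ = |T x| * f x^2 := by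
          rw [norm_mul, Real.norm_eq_abs, Real.norm_eq_abs, abs_neg,
            abs_of_nonneg (sq_nonneg (f x))]
      _ ≤ s * f x ^2 := mul_le_mul_of_nonneg_right (hTbd x) (sq_nonneg _)
  have hFTC := integral_Ioi_of_hasDerivAt_of_tendsto' (f := F)
    (fun x _ => hFderiv x) (iInt.sub ih2) hFtend
  rw [integral_sub iInt ih2] at hFTC
  have hF0 : F 0 = -(T 0) * f 0 ^ 2 := rfl
  rw [hF0] at hFTC
  show (∫ x in Ioi (0:ℝ), ((deriv f x)^2 + ω * f x^2 - w x ^ (2*μ:ℝ) * f x^2))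
      = (∫ x in Ioi (0:ℝ), (deriv f x + T x * f x) ^ 2) + T 0 * f 0 ^ 2
  linarith [hFTC]

/-- The quadratic form of the linearization operator `L₊` around the `N`-tail
state with common component `w`, evaluated on the `N`-tuple `ψ` (with vertex
value taken at the edge `k₀`):
`Σ_k ∫₀^∞ (ψ_k'² + ω ψ_k² − w^{2μ} ψ_k²) dx + α ψ₁(0)²`. -/
noncomputable def LplusForm (μ ω α : ℝ) {N : ℕ} (w : ℝ → ℝ)
    (ψ : Fin N → ℝ → ℝ) (k₀ : Fin N) : ℝ :=
  (∑ k : Fin N, ∫ x in Ioi (0 : ℝ),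
      ((deriv (ψ k) x) ^ 2 + ω * (ψ k x) ^ 2 - w x ^ (2 * μ) * (ψ k x) ^ 2))
    + α * (ψ k₀ 0) ^ 2

theorem stmt_13 (μ α : ℝ) (hμ : 0 < μ) (hα : α < 0) (N : ℕ) (hN : 0 < N)
    (ω : ℝ) (hω : ω > α ^ 2 / (N : ℝ) ^ 2)
    (a₀ : ℝ) (ha₀ : a₀ = 1 / (μ * Real.sqrt ω) * arctanh (|α| / (N * Real.sqrt ω)))
    (w : ℝ → ℝ) (hw : w = solitonProfile μ ω (-a₀))
    (ψ : Fin N → ℝ → ℝ)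
    (hC1 : ∀ k, ContDiff ℝ 1 (ψ k))
    (hvertex : ∀ k l : Fin N, ψ k 0 = ψ l 0)
    (hL2 : ∀ k, IntegrableOn (fun x => (ψ k x) ^ 2) (Ioi 0))
    (hL2' : ∀ k, IntegrableOn (fun x => (deriv (ψ k) x) ^ 2) (Ioi 0))
    (hdecay : ∀ k, Tendsto (ψ k) atTop (nhds 0)) :
    -- the quadratic form of `L₊` is a weighted Dirichlet form
    LplusForm μ ω α w ψ ⟨0, hN⟩
      = ∑ k : Fin N, ∫ x in Ioi (0 : ℝ),
          w x ^ 2 * (deriv (fun y => ψ k y / w y) x) ^ 2 ∧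
    -- in particular it is nonnegative
    0 ≤ LplusForm μ ω α w ψ ⟨0, hN⟩ ∧
    -- and it vanishes iff every `ψ_k` is the same constant multiple of `w`
    (LplusForm μ ω α w ψ ⟨0, hN⟩ = 0 ↔
      ∃ c : ℝ, ∀ k : Fin N, ∀ x : ℝ, 0 ≤ x → ψ k x = c * w x) := by
  subst hw
  set w := solitonProfile μ ω (-a₀) with hw
  set k₀ : Fin N := ⟨0, hN⟩ with hk₀
  -- basic positivity facts
  have hNpos : (0:ℝ) < (N:ℝ) := Nat.cast_pos.mpr hN
  have hα2 : 0 < α^2 := by nlinarith [hα]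
  have hωpos : 0 < ω := lt_trans (div_pos hα2 (by positivity)) hω
  have hs : 0 < Real.sqrt ω := Real.sqrt_pos.mpr hωpos
  have hs2 : Real.sqrt ω ^ 2 = ω := Real.sq_sqrt hωpos.le
  have hwpos : ∀ x, 0 < w x := fun x => soliton_pos μ ω hμ hωpos (-a₀) x
  -- the vertex coefficient
  have hαlt : |α| < (N:ℝ) * Real.sqrt ω := by
    have h1 : α^2 < ω * (N:ℝ)^2 := by
      rw [gt_iff_lt, div_lt_iff₀ (by positivity)] at hω
      linarith
    nlinarith [abs_nonneg α, sq_abs α, mul_pos hNpos hs]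
  have hy1 : 0 < |α| / ((N:ℝ) * Real.sqrt ω) := div_pos (abs_pos.mpr hα.ne) (by positivity)
  have hy2 : |α| / ((N:ℝ) * Real.sqrt ω) < 1 := (div_lt_one (by positivity)).mpr hαlt
  have htanh : Real.tanh (μ * Real.sqrt ω * (0 + a₀)) = |α| / ((N:ℝ) * Real.sqrt ω) := by
    have harg : μ * Real.sqrt ω * (0 + a₀) = arctanh (|α| / ((N:ℝ) * Real.sqrt ω)) := by
      rw [ha₀]; field_simp; ring
    rw [harg]
    exact tanh_arctanh (by linarith) hy2
  have hT0 : Real.sqrt ω * Real.tanh (μ * Real.sqrt ω * (0 + a₀)) = -α / N := by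
    rw [htanh, abs_of_neg hα]
    field_simp
  -- per-edge facts
  have E := fun k => edge μ ω a₀ hμ hωpos (ψ k) (hC1 k) (hL2 k) (hL2' k) (hdecay k)
  -- pointwise identity for the weighted integrand
  have hptw : ∀ k x, w x ^ 2 * (deriv (fun y => ψ k y / w y) x) ^ 2
      = (deriv (ψ k) x + Real.sqrt ω * Real.tanh (μ * Real.sqrt ω * (x + a₀)) * ψ k x) ^ 2 := by
    intro k x
    rw [((E k).2.1 x).deriv, ← hw]
    field_simp [(hwpos x).ne']
  have hIeq : ∀ k, (∫ x in Ioi (0:ℝ), w x ^ 2 * (deriv (fun y => ψ k y / w y) x) ^ 2)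
      = ∫ x in Ioi (0:ℝ),
        (deriv (ψ k) x + Real.sqrt ω * Real.tanh (μ * Real.sqrt ω * (x + a₀)) * ψ k x) ^ 2 := by
    intro k
    exact congrArg _ (funext fun x => hptw k x)
  -- the key per-edge integral identity
  have key : ∀ k, (∫ x in Ioi (0:ℝ),
        ((deriv (ψ k) x) ^ 2 + ω * (ψ k x) ^ 2 - w x ^ (2 * μ) * (ψ k x) ^ 2))
      = (∫ x in Ioi (0:ℝ), w x ^ 2 * (deriv (fun y => ψ k y / w y) x) ^ 2)
        + (-α / N) * (ψ k₀ 0) ^ 2 := by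
    intro k
    rw [hIeq k, ← hT0, ← hvertex k k₀]
    exact (E k).2.2
  -- the main identity
  have hNne : ((N:ℝ)) ≠ 0 := hNpos.ne'
  have hmain : LplusForm μ ω α w ψ k₀
      = ∑ k : Fin N, ∫ x in Ioi (0 : ℝ),
          w x ^ 2 * (deriv (fun y => ψ k y / w y) x) ^ 2 := by
    unfold LplusForm
    rw [Finset.sum_congr rfl (fun k _ => key k), Finset.sum_add_distrib,
      Finset.sum_const, Finset.card_univ, Fintype.card_fin, nsmul_eq_mul]
    field_simp
    ring
  have hnn : ∀ k : Fin N, (0:ℝ) ≤ ∫ x in Ioi (0 : ℝ),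
      w x ^ 2 * (deriv (fun y => ψ k y / w y) x) ^ 2 := by
    intro k
    apply setIntegral_nonneg measurableSet_Ioi
    intro x _
    positivity
  refine ⟨hmain, by rw [hmain]; exact Finset.sum_nonneg (fun k _ => hnn k), ?_⟩
  constructor
  · -- vanishing implies constant multiple
    intro h0
    rw [hmain] at h0
    have hz : ∀ k ∈ Finset.univ, (∫ x in Ioi (0 : ℝ),
        w x ^ 2 * (deriv (fun y => ψ k y / w y) x) ^ 2) = 0 :=
      (Finset.sum_eq_zero_iff_of_nonneg (fun k _ => hnn k)).mp h0
    refine ⟨ψ k₀ 0 / w 0, fun k x hx => ?_⟩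
    -- the function h_k vanishes on [0, ∞)
    set h : ℝ → ℝ := fun x =>
      deriv (ψ k) x + Real.sqrt ω * Real.tanh (μ * Real.sqrt ω * (x + a₀)) * ψ k x with hh
    have hhc : Continuous h := by
      apply ((hC1 k).continuous_deriv le_rfl).add
      exact (continuous_const.mul (real_continuous_tanh.comp
        (continuous_const.mul (continuous_id.add continuous_const)))).mul
        ((hC1 k).continuous)
    have hint0 : (∫ x in Ioi (0:ℝ), h x ^ 2) = 0 := by
      rw [← hIeq k]; exact hz k (Finset.mem_univ k)
    have hae : (fun x => h x ^ 2) =ᵐ[volume.restrict (Ioi (0:ℝ))] 0 :=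
      (integral_eq_zero_iff_of_nonneg (fun x => sq_nonneg _) (E k).1).mp hint0
    have heqOn : EqOn (fun x => h x ^ 2) 0 (Ioi (0:ℝ)) := by
      apply Measure.eqOn_of_ae_eq hae (hhc.pow 2).continuousOn continuousOn_const
      rw [isOpen_Ioi.interior_eq, closure_Ioi]
      exact Ioi_subset_Ici_self
    have hzero : ∀ y : ℝ, 0 < y → h y = 0 := fun y hy =>
      sq_eq_zero_iff.mp (by simpa using heqOn hy)
    have hzero0 : h 0 = 0 := by
      have h1 : Tendsto h (nhdsWithin 0 (Ioi 0)) (nhds (h 0)) :=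
        (hhc.continuousAt).continuousWithinAt.tendsto
      have h2 : Tendsto h (nhdsWithin 0 (Ioi 0)) (nhds 0) := by
        apply Tendsto.congr' _ tendsto_const_nhds
        filter_upwards [self_mem_nhdsWithin] with y hy
        exact (hzero y hy).symm
      exact tendsto_nhds_unique h1 h2
    have hzero' : ∀ y : ℝ, 0 ≤ y → h y = 0 := by
      intro y hy
      rcases eq_or_lt_of_le hy with rfl | hy'
      · exact hzero0
      · exact hzero y hy'
    -- the quotient is constant on [0, x]
    have hconst : ψ k x / w x = ψ k 0 / w 0 := by
      have hu : ∀ y : ℝ, HasDerivAt (fun z => ψ k z / w z) (h y / w y) y := (E k).2.1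
      have hcont : ContinuousOn (fun z => ψ k z / w z) (Icc 0 x) :=
        (Differentiable.continuous (fun y => (hu y).differentiableAt)).continuousOn
      have hderiv : ∀ y ∈ Ico (0:ℝ) x, HasDerivWithinAt (fun z => ψ k z / w z) 0 (Ici y) y := by
        intro y hy
        have := (hu y).hasDerivWithinAt (s := Ici y)
        rwa [hzero' y hy.1, zero_div] at this
      exact constant_of_has_deriv_right_zero hcont hderiv x ⟨hx, le_refl x⟩
    rw [← hvertex k k₀]
    calc ψ k x = (ψ k x / w x) * w x := (div_mul_cancel₀ _ (hwpos x).ne').symm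
      _ = (ψ k 0 / w 0) * w x := by rw [hconst]
  · -- constant multiple implies vanishing
    rintro ⟨c, hc⟩
    rw [hmain]
    apply Finset.sum_eq_zero
    intro k _
    have heq : EqOn (fun x => w x ^ 2 * (deriv (fun y => ψ k y / w y) x) ^ 2)
        (fun _ => (0:ℝ)) (Ioi (0:ℝ)) := by
      intro x hx
      have hev : (fun y => ψ k y / w y) =ᶠ[nhds x] (fun _ => c) := by
        filter_upwards [isOpen_Ioi.mem_nhds hx] with y hy
        show ψ k y / w y = c
        rw [hc k y (le_of_lt hy)]
        exact mul_div_cancel_right₀ c (hwpos y).ne'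
      have hd : deriv (fun y => ψ k y / w y) x = 0 := by
        rw [hev.deriv_eq, deriv_const]
      show w x ^ 2 * (deriv (fun y => ψ k y / w y) x) ^ 2 = 0
      rw [hd]; ring
    rw [setIntegral_congr_fun measurableSet_Ioi heq]
    exact integral_zero _ _
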